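/- arXiv:2402.19016 — 2 statements merged into one kernel-verified Lean document; each statement's English description precedes it below -/
import Mathlib

section
/- Near-orthogonality from RIP: Let X ∈ ℝ^{n×p} and let S1, S2 ⊆ {1,...,p} be disjoint index sets with ζ_{|S1|+|S2|} < 1 (the RIP constant of X at order |S1|+|S2|). Then for any u ∈ ℝ^{|S2|}, ‖X_{S1}^T X_{S2} u‖₂ ≤ ζ_{|S1|+|S2|} ‖u‖₂. -/
open Matrix

noncomputable def norm2 {n : ℕ} (v : Fin n → ℝ) : ℝ := Real.sqrt (∑ i, v i ^ 2)

def IsRIP {n p : ℕ} (X : Matrix (Fin n) (Fin p) ℝ) (K : ℕ) (ζ : ℝ) : Prop :=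
  ∀ v : Fin p → ℝ, (Finset.univ.filter (fun i => v i ≠ 0)).card ≤ K →
    (1 - ζ) * norm2 v ^ 2 ≤ norm2 (X.mulVec v) ^ 2 ∧
      norm2 (X.mulVec v) ^ 2 ≤ (1 + ζ) * norm2 v ^ 2

lemma norm2_sq {n : ℕ} (v : Fin n → ℝ) : norm2 v ^ 2 = ∑ i, v i ^ 2 :=
  Real.sq_sqrt (Finset.sum_nonneg fun i _ => sq_nonneg (v i))

lemma norm2_nonneg {n : ℕ} (v : Fin n → ℝ) : 0 ≤ norm2 v := Real.sqrt_nonneg _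

noncomputable def emb {s p : ℕ} (e : Fin s → Fin p) (v : Fin s → ℝ) : Fin p → ℝ :=
  fun j => ∑ i, if e i = j then v i else 0

lemma emb_apply {s p : ℕ} {e : Fin s → Fin p} (he : Function.Injective e)
    (v : Fin s → ℝ) (i : Fin s) : emb e v (e i) = v i := by
  unfold emb
  rw [Finset.sum_eq_single i]
  · simp
  · intro b _ hb
    simp [he.ne hb]
  · simp

lemma emb_ne_zero {s p : ℕ} {e : Fin s → Fin p} {v : Fin s → ℝ} {j : Fin p}
    (h : emb e v j ≠ 0) : ∃ i, e i = j := by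
  by_contra hc
  push_neg at hc
  exact h (Finset.sum_eq_zero fun i _ => by simp [hc i])

lemma mulVec_emb {n s p : ℕ} (X : Matrix (Fin n) (Fin p) ℝ) (e : Fin s → Fin p)
    (v : Fin s → ℝ) : X.mulVec (emb e v) = (X.submatrix id e).mulVec v := by
  funext k
  simp only [mulVec, dotProduct, emb, submatrix_apply, id]
  simp only [Finset.mul_sum, mul_ite, mul_zero]
  rw [Finset.sum_comm]
  simp [Finset.sum_ite_eq]

lemma sum_sq_emb {s p : ℕ} {e : Fin s → Fin p} (he : Function.Injective e)
    (v : Fin s → ℝ) : ∑ j, emb e v j ^ 2 = ∑ i, v i ^ 2 := by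
  have : ∀ j, emb e v j ^ 2 = ∑ i, if e i = j then v i * emb e v j else 0 := by
    intro j
    rw [sq, emb, Finset.sum_mul]
    congr 1
    funext i
    split <;> simp
  simp only [this]
  rw [Finset.sum_comm]
  simp only [Finset.sum_ite_eq, Finset.mem_univ, if_true]
  exact Finset.sum_congr rfl fun i _ => by rw [emb_apply he, sq]

lemma emb_mul_emb {s₁ s₂ p : ℕ} {e₁ : Fin s₁ → Fin p} {e₂ : Fin s₂ → Fin p}
    (hdisj : ∀ i j, e₁ i ≠ e₂ j) (v : Fin s₁ → ℝ) (u : Fin s₂ → ℝ) (j : Fin p) :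
    emb e₁ v j * emb e₂ u j = 0 := by
  rcases eq_or_ne (emb e₁ v j) 0 with h | h
  · rw [h, zero_mul]
  rcases eq_or_ne (emb e₂ u j) 0 with h2 | h2
  · rw [h2, mul_zero]
  obtain ⟨i, hi⟩ := emb_ne_zero h
  obtain ⟨i', hi'⟩ := emb_ne_zero h2
  exact absurd (hi.trans hi'.symm) (hdisj i i')

lemma card_support_le {s₁ s₂ p : ℕ} {e₁ : Fin s₁ → Fin p} {e₂ : Fin s₂ → Fin p}
    (he₁ : Function.Injective e₁) (he₂ : Function.Injective e₂)
    (v : Fin s₁ → ℝ) (u : Fin s₂ → ℝ) :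
    (Finset.univ.filter (fun j => (emb e₁ v + emb e₂ u) j ≠ 0)).card ≤ s₁ + s₂ := by
  have hsub : Finset.univ.filter (fun j => (emb e₁ v + emb e₂ u) j ≠ 0) ⊆
      Finset.univ.image e₁ ∪ Finset.univ.image e₂ := by
    intro j hj
    simp only [Finset.mem_filter, Pi.add_apply] at hj
    rcases eq_or_ne (emb e₁ v j) 0 with h | h
    · have h2 : emb e₂ u j ≠ 0 := by
        intro h2; exact hj.2 (by rw [h, h2, add_zero])
      obtain ⟨i, hi⟩ := emb_ne_zero h2
      exact Finset.mem_union_right _ (Finset.mem_image.2 ⟨i, Finset.mem_univ i, hi⟩)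
    · obtain ⟨i, hi⟩ := emb_ne_zero h
      exact Finset.mem_union_left _ (Finset.mem_image.2 ⟨i, Finset.mem_univ i, hi⟩)
  calc (Finset.univ.filter (fun j => (emb e₁ v + emb e₂ u) j ≠ 0)).card
      ≤ (Finset.univ.image e₁ ∪ Finset.univ.image e₂).card := Finset.card_le_card hsub
    _ ≤ (Finset.univ.image e₁).card + (Finset.univ.image e₂).card := Finset.card_union_le _ _
    _ ≤ s₁ + s₂ := by
        rw [Finset.card_image_of_injective _ he₁, Finset.card_image_of_injective _ he₂]
        simp

lemma key {n p s₁ s₂ : ℕ} (X : Matrix (Fin n) (Fin p) ℝ) (ζ : ℝ)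
    (hRIP : IsRIP X (s₁ + s₂) ζ)
    (e₁ : Fin s₁ → Fin p) (e₂ : Fin s₂ → Fin p)
    (he₁ : Function.Injective e₁) (he₂ : Function.Injective e₂)
    (hdisj : ∀ i j, e₁ i ≠ e₂ j) (v : Fin s₁ → ℝ) (u : Fin s₂ → ℝ) :
    ∑ k, ((X.submatrix id e₁).mulVec v) k * ((X.submatrix id e₂).mulVec u) k
      ≤ ζ * (∑ i, v i ^ 2 + ∑ i, u i ^ 2) / 2 := by
  set N : ℝ := ∑ i, v i ^ 2 + ∑ i, u i ^ 2 with hN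
  -- norms of the combined vectors
  have hnorm : ∀ w : Fin s₂ → ℝ, (∑ i, w i ^ 2 = ∑ i, u i ^ 2) →
      norm2 (emb e₁ v + emb e₂ w) ^ 2 = N := by
    intro w hw
    rw [norm2_sq]
    have : ∀ j, (emb e₁ v + emb e₂ w) j ^ 2 = emb e₁ v j ^ 2 + emb e₂ w j ^ 2 := by
      intro j
      have := emb_mul_emb hdisj v w j
      simp only [Pi.add_apply]
      ring_nf
      nlinarith [this]
    simp only [this]
    rw [Finset.sum_add_distrib, sum_sq_emb he₁, sum_sq_emb he₂, hw]
  have hplus := (hRIP (emb e₁ v + emb e₂ u) (card_support_le he₁ he₂ v u)).2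
  have hminus := (hRIP (emb e₁ v + emb e₂ (-u)) (card_support_le he₁ he₂ v (-u))).1
  rw [hnorm u rfl] at hplus
  rw [hnorm (-u) (by simp)] at hminus
  set a : Fin n → ℝ := (X.submatrix id e₁).mulVec v with ha
  set b : Fin n → ℝ := (X.submatrix id e₂).mulVec u with hb
  have hXp : X.mulVec (emb e₁ v + emb e₂ u) = a + b := by
    rw [mulVec_add, mulVec_emb, mulVec_emb]
  have hXm : X.mulVec (emb e₁ v + emb e₂ (-u)) = a - b := by
    rw [mulVec_add, mulVec_emb, mulVec_emb]
    have : (X.submatrix id e₂).mulVec (-u) = -b := by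
      rw [hb, mulVec_neg]
    rw [this]; funext k; simp [sub_eq_add_neg, ha]
  rw [hXp] at hplus
  rw [hXm] at hminus
  have hps : norm2 (a + b) ^ 2 = ∑ k, (a k + b k) ^ 2 := norm2_sq _
  have hms : norm2 (a - b) ^ 2 = ∑ k, (a k - b k) ^ 2 := norm2_sq _
  have hpol : ∑ k, (a k + b k) ^ 2 - ∑ k, (a k - b k) ^ 2 = 4 * ∑ k, a k * b k := by
    rw [← Finset.sum_sub_distrib, Finset.mul_sum]
    exact Finset.sum_congr rfl fun k _ => by ring
  clear_value N a b
  have e1 : (1 + ζ) * N = N + ζ * N := by ring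
  have e2 : (1 - ζ) * N = N - ζ * N := by ring
  rw [e1, hps] at hplus
  rw [e2, hms] at hminus
  linarith


/-- Near-orthogonality from RIP: for disjoint index sets `S₁, S₂` (encoded by injections
with disjoint ranges) and RIP constant `ζ` of order `|S₁| + |S₂|`,
`‖X_{S₁}ᵀ X_{S₂} u‖₂ ≤ ζ ‖u‖₂`. -/
theorem rip_near_orthogonality {n p s₁ s₂ : ℕ} (X : Matrix (Fin n) (Fin p) ℝ) (ζ : ℝ)
    (hζ1 : ζ < 1) (hRIP : IsRIP X (s₁ + s₂) ζ)
    (e₁ : Fin s₁ → Fin p) (e₂ : Fin s₂ → Fin p)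
    (he₁ : Function.Injective e₁) (he₂ : Function.Injective e₂)
    (hdisj : ∀ i j, e₁ i ≠ e₂ j) (u : Fin s₂ → ℝ) :
    norm2 (((X.submatrix id e₁)ᵀ * X.submatrix id e₂).mulVec u) ≤ ζ * norm2 u := by
  set w : Fin s₁ → ℝ := ((X.submatrix id e₁)ᵀ * X.submatrix id e₂).mulVec u with hwdef
  have hdot : ∀ v : Fin s₁ → ℝ,
      ∑ k, ((X.submatrix id e₁).mulVec v) k * ((X.submatrix id e₂).mulVec u) k
        = ∑ i, v i * w i := by
    intro v
    have hw' : w = (X.submatrix id e₁)ᵀ.mulVec ((X.submatrix id e₂).mulVec u) := by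
      rw [hwdef, mulVec_mulVec]
    rw [hw']
    set c := (X.submatrix id e₂).mulVec u with hc
    simp only [mulVec, dotProduct, transpose_apply, Finset.sum_mul]
    rw [Finset.sum_comm]
    refine Finset.sum_congr rfl fun i _ => ?_
    rw [Finset.mul_sum]
    exact Finset.sum_congr rfl fun k _ => by ring
  have hnusq : norm2 u ^ 2 = ∑ i, u i ^ 2 := norm2_sq u
  have hnwsq : norm2 w ^ 2 = ∑ i, w i ^ 2 := norm2_sq w
  have hnu0 : 0 ≤ norm2 u := norm2_nonneg u
  have hnw0 : 0 ≤ norm2 w := norm2_nonneg w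
  rcases eq_or_lt_of_le hnw0 with hw0 | hwpos
  · -- norm2 w = 0
    rw [← hw0]
    have h0 := key X ζ hRIP e₁ e₂ he₁ he₂ hdisj 0 u
    simp only [mulVec_zero, Pi.zero_apply, zero_mul, Finset.sum_const_zero] at h0
    have h0' : 0 ≤ ζ * norm2 u ^ 2 := by
      rw [hnusq]
      simp at h0
      linarith
    rcases eq_or_lt_of_le hnu0 with hu0 | hupos
    · rw [← hu0, mul_zero]
    · have hζ0 : 0 ≤ ζ := by
        by_contra hc
        push_neg at hc
        nlinarith [pow_pos hupos 2, h0']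
      positivity
  · -- norm2 w > 0
    have hupos : 0 < norm2 u := by
      rcases eq_or_lt_of_le hnu0 with hu0 | hupos
      · exfalso
        have husum : ∑ i, u i ^ 2 = 0 := by rw [← hnusq, ← hu0]; ring
        have hu : u = 0 := by
          funext i
          have := (Finset.sum_eq_zero_iff_of_nonneg
            (fun i _ => sq_nonneg (u i))).1 husum i (Finset.mem_univ i)
          exact pow_eq_zero_iff (by norm_num) |>.1 this
        rw [hu] at hwdef
        have : w = 0 := by rw [hwdef, mulVec_zero]
        rw [this] at hwpos
        simp [norm2] at hwpos
      · exact hupos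
    set nu := norm2 u
    set nw := norm2 w
    have hkey := key X ζ hRIP e₁ e₂ he₁ he₂ hdisj (fun i => (nu / nw) * w i) u
    rw [hdot] at hkey
    have hL : ∑ i, ((nu / nw) * w i) * w i = nu * nw := by
      have : ∑ i, ((nu / nw) * w i) * w i = (nu / nw) * ∑ i, w i ^ 2 := by
        rw [Finset.mul_sum]
        exact Finset.sum_congr rfl fun i _ => by ring
      rw [this, ← hnwsq]
      field_simp
      try ring
    have hV : ∑ i, ((nu / nw) * w i) ^ 2 = nu ^ 2 := by
      have : ∑ i, ((nu / nw) * w i) ^ 2 = (nu / nw) ^ 2 * ∑ i, w i ^ 2 := by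
        rw [Finset.mul_sum]
        exact Finset.sum_congr rfl fun i _ => by ring
      rw [this, ← hnwsq]
      field_simp
      try ring
    rw [hL, hV, ← hnusq] at hkey
    nlinarith
end

section
/- OLS estimation error under exact support: let y = X_S α_S + ε with X/√n satisfying RIP of order s with constant ζ_s < 1, |S| = s, and let α̂ = (X_S^T X_S)^{-1} X_S^T y. Then ‖α̂ - α_S‖₂ ≤ ‖X_S^T ε‖₂ / (n(1 - ζ_s)). In particular, if the entries of X are bounded by X_M and ε has i.i.d. N(0,σ_ε²) entries, then with probability at least 1 - p_b, ‖α̂ - α_S‖₂ ≤ σ_ε X_M √(2 s log(2s/p_b)) / ((1-ζ_s)√n). -/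
open Matrix MeasureTheory ProbabilityTheory
open scoped NNReal ENNReal

namespace OLSAux

open Real

lemma pdf_shift {v : ℝ≥0} (hv : v ≠ 0) (a x : ℝ) :
    rexp (a * x) * gaussianPDFReal 0 v x
      = rexp (a ^ 2 * v / 2) * gaussianPDFReal (a * v) v x := by
  have hv' : (0:ℝ) < (v:ℝ) := by positivity
  simp only [gaussianPDFReal, sub_zero]
  rw [mul_left_comm, ← Real.exp_add, mul_left_comm, ← Real.exp_add]
  congr 2
  field_simp
  ring

lemma integrable_exp_gaussian {v : ℝ≥0} (hv : v ≠ 0) (a : ℝ) :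
    Integrable (fun x => rexp (a * x)) (gaussianReal 0 v) := by
  rw [gaussianReal_of_var_ne_zero _ hv,
    integrable_withDensity_iff (measurable_gaussianPDF _ _)
      (ae_of_all _ fun x => ENNReal.ofReal_lt_top)]
  have h : (fun x => rexp (a * x) * (gaussianPDF 0 v x).toReal)
      = fun x => rexp (a ^ 2 * v / 2) * gaussianPDFReal (a * v) v x := by
    ext x
    rw [gaussianPDF, ENNReal.toReal_ofReal (gaussianPDFReal_nonneg _ _ _)]
    exact pdf_shift hv a x
  rw [h]
  exact (integrable_gaussianPDFReal _ _).const_mul _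

lemma integral_exp_gaussian {v : ℝ≥0} (hv : v ≠ 0) (a : ℝ) :
    ∫ x, rexp (a * x) ∂(gaussianReal 0 v) = rexp (a ^ 2 * v / 2) := by
  rw [gaussianReal_of_var_ne_zero _ hv]
  have h1 : gaussianPDF 0 v
      = fun x => (((gaussianPDFReal 0 v x).toNNReal : ℝ≥0) : ℝ≥0∞) := rfl
  rw [h1, integral_withDensity_eq_integral_smul
    (measurable_gaussianPDFReal 0 v).real_toNNReal]
  have h2 : ∀ x, ((gaussianPDFReal 0 v x).toNNReal : ℝ≥0) • rexp (a * x)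
      = rexp (a ^ 2 * v / 2) * gaussianPDFReal (a * v) v x := by
    intro x
    rw [NNReal.smul_def, smul_eq_mul, Real.coe_toNNReal _ (gaussianPDFReal_nonneg _ _ _),
      mul_comm]
    exact pdf_shift hv a x
  simp_rw [h2]
  rw [integral_const_mul, integral_gaussianPDFReal_eq_one _ hv, mul_one]

set_option maxHeartbeats 2000000 in
lemma gauss_tail {n : ℕ} {v : ℝ≥0} (hv : v ≠ 0) (c : Fin n → ℝ) {W t : ℝ}
    (hW : 0 < W) (hVW : (v : ℝ) * ∑ i, c i ^ 2 ≤ W) (ht : 0 ≤ t) :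
    (Measure.pi fun _ : Fin n => gaussianReal 0 v) {x | t ≤ ∑ i, c i * x i}
      ≤ ENNReal.ofReal (rexp (-(t ^ 2) / (2 * W))) := by
  set μ : Measure (Fin n → ℝ) := Measure.pi fun _ => gaussianReal 0 v with hμ
  haveI : IsProbabilityMeasure μ := by rw [hμ]; infer_instance
  set l : ℝ := t / W with hl
  have hl0 : 0 ≤ l := div_nonneg ht hW.le
  have hprod : (fun x : Fin n → ℝ => rexp (l * ∑ i, c i * x i))
      = fun x => ∏ i, rexp ((l * c i) * x i) := by
    ext x
    rw [← Real.exp_sum, Finset.mul_sum]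
    congr 1
    exact Finset.sum_congr rfl fun i _ => by ring
  have h_int : Integrable (fun x : Fin n → ℝ => rexp (l * ∑ i, c i * x i)) μ := by
    letI : MeasureSpace ℝ := ⟨gaussianReal 0 v⟩
    haveI : SigmaFinite (volume : Measure ℝ) :=
      (inferInstance : SigmaFinite (gaussianReal 0 v))
    rw [hprod]
    exact Integrable.fintype_prod (f := fun i x => rexp ((l * c i) * x))
      fun i => integrable_exp_gaussian hv _
  have hch := measure_ge_le_exp_mul_mgf (μ := μ) (X := fun x : Fin n → ℝ => ∑ i, c i * x i) (t := l) t hl0 h_int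
  set V : ℝ := (v : ℝ) * ∑ i, c i ^ 2 with hV
  have hV0 : 0 ≤ V := by positivity
  have hmgf : mgf (fun x : Fin n → ℝ => ∑ i, c i * x i) μ l = rexp (l ^ 2 * V / 2) := by
    letI : MeasureSpace ℝ := ⟨gaussianReal 0 v⟩
    haveI : SigmaFinite (volume : Measure ℝ) :=
      (inferInstance : SigmaFinite (gaussianReal 0 v))
    rw [mgf]
    calc ∫ x, rexp (l * ∑ i, c i * x i) ∂μ
        = ∫ x : Fin n → ℝ, ∏ i, rexp ((l * c i) * x i) := by rw [hprod]; rfl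
      _ = ∏ i, ∫ x : ℝ, rexp ((l * c i) * x) :=
          integral_fintype_prod_eq_prod (fun i x => rexp ((l * c i) * x))
      _ = ∏ i, rexp ((l * c i) ^ 2 * v / 2) :=
          Finset.prod_congr rfl fun i _ => integral_exp_gaussian hv _
      _ = rexp (l ^ 2 * V / 2) := by
          rw [← Real.exp_sum]
          congr 1
          rw [hV, Finset.mul_sum, Finset.mul_sum, Finset.sum_div]
          exact Finset.sum_congr rfl fun i _ => by ring
  have hexp : -l * t + l ^ 2 * V / 2 ≤ -(t ^ 2) / (2 * W) := by
    have hlW : l * W = t := by rw [hl, div_mul_cancel₀ t hW.ne']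
    rw [← hlW]
    have h3 : -((l * W) ^ 2) / (2 * W) = -(l ^ 2 * W) / 2 := by
      field_simp
    rw [h3]
    nlinarith [sq_nonneg l, hVW, hW]
  calc μ {x | t ≤ ∑ i, c i * x i}
      = ENNReal.ofReal ((μ {x | t ≤ ∑ i, c i * x i}).toReal) :=
        (ENNReal.ofReal_toReal (measure_ne_top _ _)).symm
    _ ≤ ENNReal.ofReal (rexp (-l * t) * mgf (fun x : Fin n → ℝ => ∑ i, c i * x i) μ l) :=
        ENNReal.ofReal_le_ofReal hch
    _ = ENNReal.ofReal (rexp (-l * t + l ^ 2 * V / 2)) := by rw [hmgf, ← Real.exp_add]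
    _ ≤ ENNReal.ofReal (rexp (-(t ^ 2) / (2 * W))) :=
        ENNReal.ofReal_le_ofReal (Real.exp_le_exp.mpr hexp)

end OLSAux

/-- OLS estimation error under exact support: with `y = X_S α_S + ε`, RIP of order `s` for
`X/√n` with constant `ζ < 1`, and `α̂ = (X_Sᵀ X_S)⁻¹ X_Sᵀ y`:
(i) `‖α̂ - α_S‖₂ ≤ ‖X_Sᵀ ε‖₂ / (n(1-ζ))`;
(ii) if the entries of `X` are bounded by `X_M` and `ε` has i.i.d. `N(0, σ_ε²)` entries,
then with probability at least `1 - p_b`,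
`‖α̂ - α_S‖₂ ≤ σ_ε X_M √(2 s log(2s/p_b)) / ((1-ζ)√n)`. -/
theorem ols_estimation_error {Ω : Type*} [MeasurableSpace Ω] (P : Measure Ω)
    [IsProbabilityMeasure P] {n p s : ℕ} (hn : 0 < n)
    (X : Matrix (Fin n) (Fin p) ℝ) (XM : ℝ) (hXM : ∀ i j, |X i j| ≤ XM)
    (e : Fin s → Fin p) (he : Function.Injective e)
    (ζ : ℝ) (hζ0 : 0 ≤ ζ) (hζ1 : ζ < 1)
    (hRIP : IsRIP ((1 / Real.sqrt n) • X) s ζ)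
    (αS : Fin s → ℝ)
    (ε : Ω → Fin n → ℝ) (hmeas : Measurable ε) (σε : ℝ) (hσ : 0 < σε)
    (hlaw : Measure.map ε P =
      Measure.pi (fun _ : Fin n => gaussianReal 0 ⟨σε ^ 2, sq_nonneg σε⟩))
    (p_b : ℝ) (hp0 : 0 < p_b) (hp1 : p_b < 1)
    (αhat : Ω → Fin s → ℝ)
    (hαhat : ∀ ω, αhat ω = (((X.submatrix id e)ᵀ * X.submatrix id e)⁻¹).mulVec
        ((X.submatrix id e)ᵀ.mulVec ((X.submatrix id e).mulVec αS + ε ω))) :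
    (∀ ω, norm2 (αhat ω - αS) ≤
        norm2 ((X.submatrix id e)ᵀ.mulVec (ε ω)) / (n * (1 - ζ))) ∧
    1 - ENNReal.ofReal p_b ≤
      P {ω | norm2 (αhat ω - αS) ≤
        σε * XM * Real.sqrt (2 * s * Real.log (2 * s / p_b)) / ((1 - ζ) * Real.sqrt n)} := by
  classical
  have hn' : (0:ℝ) < n := by exact_mod_cast hn
  have hζ' : (0:ℝ) < 1 - ζ := sub_pos.mpr hζ1
  have hc : (0:ℝ) < n * (1 - ζ) := mul_pos hn' hζ'
  set XS : Matrix (Fin n) (Fin s) ℝ := X.submatrix id e with hXSdef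
  set A : Matrix (Fin s) (Fin s) ℝ := XSᵀ * XS with hAdef
  have hnorm : ∀ {m : ℕ} (u : Fin m → ℝ), norm2 u ^ 2 = ∑ i, u i ^ 2 := fun u =>
    Real.sq_sqrt (Finset.sum_nonneg fun i _ => sq_nonneg _)
  -- RIP key inequality
  have hkey : ∀ v : Fin s → ℝ,
      (n:ℝ) * (1 - ζ) * (∑ j, v j ^ 2) ≤ ∑ i, (XS.mulVec v i) ^ 2 := by
    intro v
    set w : Fin p → ℝ := Function.extend e v 0 with hw
    have hwe : ∀ i, w (e i) = v i := fun i => he.extend_apply v 0 i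
    have hw0 : ∀ j, j ∉ Finset.univ.image e → w j = 0 := by
      intro j hj
      refine Function.extend_apply' _ _ _ ?_
      rintro ⟨i, rfl⟩
      exact hj (Finset.mem_image_of_mem e (Finset.mem_univ i))
    have hcard : (Finset.univ.filter (fun j => w j ≠ 0)).card ≤ s := by
      have hsub : Finset.univ.filter (fun j => w j ≠ 0) ⊆ Finset.univ.image e := by
        intro j hj
        by_contra hj'
        exact (Finset.mem_filter.mp hj).2 (hw0 j hj')
      calc (Finset.univ.filter (fun j => w j ≠ 0)).card
          ≤ (Finset.univ.image e).card := Finset.card_le_card hsub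
        _ = s := by
            rw [Finset.card_image_of_injective _ he, Finset.card_univ, Fintype.card_fin]
    obtain ⟨h1, -⟩ := hRIP w hcard
    have hsum_w : ∑ j, w j ^ 2 = ∑ i, v i ^ 2 := by
      rw [← Finset.sum_subset (Finset.subset_univ (Finset.univ.image e))
        (fun j _ hj => by rw [hw0 j hj]; ring),
        Finset.sum_image (fun i _ i' _ h => he h)]
      exact Finset.sum_congr rfl fun i _ => by rw [hwe]
    have hmv : X.mulVec w = XS.mulVec v := by
      ext i
      simp only [Matrix.mulVec, dotProduct]
      rw [← Finset.sum_subset (Finset.subset_univ (Finset.univ.image e))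
        (fun j _ hj => by rw [hw0 j hj]; ring),
        Finset.sum_image (fun i _ i' _ h => he h)]
      exact Finset.sum_congr rfl fun k _ => by
        rw [hwe, hXSdef]
        simp [Matrix.submatrix_apply]
    rw [hnorm, hnorm, Matrix.smul_mulVec, hmv, hsum_w] at h1
    have hsq : ∀ i, ((1 / Real.sqrt n : ℝ) • XS.mulVec v) i ^ 2
        = (1 / (n:ℝ)) * (XS.mulVec v i) ^ 2 := by
      intro i
      have : (Real.sqrt n) ^ 2 = (n:ℝ) := Real.sq_sqrt hn'.le
      simp only [Pi.smul_apply, smul_eq_mul, mul_pow, div_pow, one_pow, this]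
    simp_rw [hsq, ← Finset.mul_sum] at h1
    calc (n:ℝ) * (1 - ζ) * (∑ j, v j ^ 2) = n * ((1 - ζ) * ∑ j, v j ^ 2) := by ring
      _ ≤ n * ((1 / (n:ℝ)) * ∑ i, (XS.mulVec v i) ^ 2) :=
          mul_le_mul_of_nonneg_left h1 hn'.le
      _ = ∑ i, (XS.mulVec v i) ^ 2 := by field_simp
  have hdot : ∀ z : Fin s → ℝ, z ⬝ᵥ A.mulVec z = ∑ i, (XS.mulVec z i) ^ 2 := by
    intro z
    rw [hAdef, ← Matrix.mulVec_mulVec, Matrix.dotProduct_mulVec, Matrix.vecMul_transpose]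
    simp [dotProduct, sq]
  have hdet : IsUnit A.det := by
    rw [isUnit_iff_ne_zero]
    intro hdet
    obtain ⟨z, hz, hz0⟩ := Matrix.exists_mulVec_eq_zero_iff.mpr hdet
    have h1 := hkey z
    rw [← hdot z, hz0, dotProduct_zero] at h1
    have hzpos : 0 < ∑ j, z j ^ 2 := by
      obtain ⟨j, hj⟩ : ∃ j, z j ≠ 0 := by
        by_contra h
        push_neg at h
        exact hz (funext h)
      exact Finset.sum_pos' (fun i _ => sq_nonneg _)
        ⟨j, Finset.mem_univ j, by positivity⟩
    nlinarith
  -- difference formula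
  have hdiff : ∀ ω, αhat ω - αS = A⁻¹.mulVec (XSᵀ.mulVec (ε ω)) := by
    intro ω
    rw [hαhat ω, Matrix.mulVec_add, Matrix.mulVec_mulVec, Matrix.mulVec_add, ← hAdef,
      Matrix.mulVec_mulVec, Matrix.nonsing_inv_mul _ hdet, Matrix.one_mulVec]
    exact add_sub_cancel_left _ _
  -- part (i)
  have part1 : ∀ ω, norm2 (αhat ω - αS) ≤
      norm2 (XSᵀ.mulVec (ε ω)) / (n * (1 - ζ)) := by
    intro ω
    set u : Fin s → ℝ := XSᵀ.mulVec (ε ω) with hu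
    set w : Fin s → ℝ := A⁻¹.mulVec u with hwdef
    rw [hdiff ω, ← hwdef]
    have hAw : A.mulVec w = u := by
      rw [hwdef, Matrix.mulVec_mulVec, Matrix.mul_nonsing_inv _ hdet, Matrix.one_mulVec]
    have hC : (n * (1 - ζ)) * norm2 w ^ 2 ≤ norm2 w * norm2 u := by
      calc (n * (1 - ζ)) * norm2 w ^ 2 = (n:ℝ) * (1 - ζ) * ∑ j, w j ^ 2 := by rw [hnorm]
        _ ≤ ∑ i, (XS.mulVec w i) ^ 2 := hkey w
        _ = w ⬝ᵥ A.mulVec w := (hdot w).symm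
        _ = ∑ j, w j * u j := by rw [hAw]; rfl
        _ ≤ Real.sqrt (∑ j, w j ^ 2) * Real.sqrt (∑ j, u j ^ 2) :=
            Real.sum_mul_le_sqrt_mul_sqrt _ _ _
        _ = norm2 w * norm2 u := rfl
    have hw0 : (0:ℝ) ≤ norm2 w := Real.sqrt_nonneg _
    rcases eq_or_lt_of_le hw0 with h0 | hpos
    · rw [← h0]
      exact div_nonneg (Real.sqrt_nonneg _) hc.le
    · rw [le_div_iff₀ hc]
      nlinarith [hC, hpos]
  refine ⟨part1, ?_⟩
  -- part (ii)
  by_cases hs : s = 0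
  · subst hs
    have hset : {ω | norm2 (αhat ω - αS) ≤
        σε * XM * Real.sqrt (2 * (0:ℕ) * Real.log (2 * (0:ℕ) / p_b)) / ((1 - ζ) * Real.sqrt n)}
        = Set.univ := by
      ext ω
      simp only [Set.mem_setOf_eq, Set.mem_univ, iff_true]
      have h1 : norm2 (αhat ω - αS) = 0 := by simp [norm2]
      have h2 : (2:ℝ) * (0:ℕ) * Real.log (2 * (0:ℕ) / p_b) = 0 := by norm_num
      rw [h1, h2, Real.sqrt_zero]
      simp
    rw [hset, measure_univ]
    exact tsub_le_self
  · have hs1 : 1 ≤ s := Nat.one_le_iff_ne_zero.mpr hs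
    have hs' : (0:ℝ) < s := by exact_mod_cast hs1
    have hXM0 : 0 ≤ XM :=
      le_trans (abs_nonneg _) (hXM ⟨0, hn⟩ (e ⟨0, hs1⟩))
    have hZcomp : ∀ y : Fin n → ℝ, ∀ j, (XSᵀ.mulVec y) j = ∑ i, X i (e j) * y i := by
      intro y j
      rw [hXSdef]
      simp [Matrix.mulVec, dotProduct, Matrix.transpose_apply, Matrix.submatrix_apply]
    by_cases hXMz : XM = 0
    · have hset : {ω | norm2 (αhat ω - αS) ≤
          σε * XM * Real.sqrt (2 * s * Real.log (2 * s / p_b)) / ((1 - ζ) * Real.sqrt n)}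
          = Set.univ := by
        ext ω
        simp only [Set.mem_setOf_eq, Set.mem_univ, iff_true]
        have hu0 : norm2 (XSᵀ.mulVec (ε ω)) = 0 := by
          have : ∀ j, (XSᵀ.mulVec (ε ω)) j = 0 := by
            intro j
            rw [hZcomp]
            refine Finset.sum_eq_zero fun i _ => ?_
            have := hXM i (e j)
            rw [hXMz] at this
            have : X i (e j) = 0 := abs_nonpos_iff.mp this
            rw [this, zero_mul]
          rw [norm2]
          simp_rw [this]
          simp
        have := part1 ω
        rw [hu0, zero_div] at this
        refine le_trans this ?_
        rw [hXMz]
        simp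
      rw [hset, measure_univ]
      exact tsub_le_self
    · have hXMpos : 0 < XM := lt_of_le_of_ne hXM0 (Ne.symm hXMz)
      set v : ℝ≥0 := ⟨σε ^ 2, sq_nonneg σε⟩ with hvdef
      have hvcoe : (v:ℝ) = σε ^ 2 := rfl
      have hv : v ≠ 0 := by
        intro h
        have : (v:ℝ) = 0 := by rw [h]; rfl
        rw [hvcoe] at this
        exact (pow_pos hσ 2).ne' this
      set R : ℝ := 2 * s / p_b with hRdef
      have hR1 : 1 ≤ R := by
        rw [hRdef, le_div_iff₀ hp0]
        have hs1' : (1:ℝ) ≤ (s:ℝ) := by exact_mod_cast hs1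
        nlinarith
      have hR0 : 0 < R := lt_of_lt_of_le one_pos hR1
      have hlogR : 0 ≤ Real.log R := Real.log_nonneg hR1
      set t : ℝ := σε * XM * Real.sqrt n * Real.sqrt (2 * Real.log R) with htdef
      have ht : 0 ≤ t := by positivity
      set W : ℝ := σε ^ 2 * ((n:ℝ) * XM ^ 2) with hWdef
      have hW : 0 < W := by positivity
      set μ : Measure (Fin n → ℝ) := Measure.pi fun _ : Fin n => gaussianReal 0 v with hμdef
      have htail : ∀ c : Fin n → ℝ, (∀ i, |c i| ≤ XM) →
          μ {x | t ≤ ∑ i, c i * x i} ≤ ENNReal.ofReal (p_b / (2 * s)) := by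
        intro c hcb
        have hVW : (v:ℝ) * ∑ i, c i ^ 2 ≤ W := by
          have hsum : ∑ i, c i ^ 2 ≤ (n:ℝ) * XM ^ 2 := by
            calc ∑ i, c i ^ 2 ≤ ∑ _i : Fin n, XM ^ 2 :=
                Finset.sum_le_sum fun i _ =>
                  sq_le_sq' (abs_le.mp (hcb i)).1 (abs_le.mp (hcb i)).2
              _ = (n:ℝ) * XM ^ 2 := by
                  rw [Finset.sum_const, Finset.card_univ, Fintype.card_fin, nsmul_eq_mul]
          rw [hvcoe, hWdef]
          exact mul_le_mul_of_nonneg_left hsum (sq_nonneg σε)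
        refine (OLSAux.gauss_tail hv c hW hVW ht).trans (ENNReal.ofReal_le_ofReal ?_)
        have ht2 : t ^ 2 = W * (2 * Real.log R) := by
          rw [htdef, hWdef]
          have h1 : Real.sqrt n ^ 2 = (n:ℝ) := Real.sq_sqrt (Nat.cast_nonneg n)
          have h2 : Real.sqrt (2 * Real.log R) ^ 2 = 2 * Real.log R :=
            Real.sq_sqrt (by positivity)
          rw [mul_pow, mul_pow, mul_pow, h1, h2]
          ring
        have hexp : -(t ^ 2) / (2 * W) = -Real.log R := by
          rw [ht2]
          field_simp
        rw [hexp, Real.exp_neg, Real.exp_log hR0, hRdef, inv_div]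
      set G : Set (Fin n → ℝ) := {x | ∀ j : Fin s, |∑ i, X i (e j) * x i| ≤ t} with hGdef
      have hGm : MeasurableSet G := by
        have : G = ⋂ j : Fin s, {x : Fin n → ℝ | |∑ i, X i (e j) * x i| ≤ t} := by
          ext x
          simp [hGdef, Set.mem_iInter]
        rw [this]
        refine MeasurableSet.iInter fun j => ?_
        exact measurableSet_le
          ((Finset.measurable_sum _ fun i _ => (measurable_pi_apply i).const_mul _).abs)
          measurable_const
      have hGc : μ Gᶜ ≤ ENNReal.ofReal p_b := by
        have hsub : Gᶜ ⊆ ⋃ j : Fin s,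
            ({x : Fin n → ℝ | t ≤ ∑ i, X i (e j) * x i} ∪
             {x : Fin n → ℝ | t ≤ ∑ i, (-(X i (e j))) * x i}) := by
          intro x hx
          simp only [hGdef, Set.mem_compl_iff, Set.mem_setOf_eq, not_forall] at hx
          obtain ⟨j, hj⟩ := hx
          rw [not_le] at hj
          refine Set.mem_iUnion.mpr ⟨j, ?_⟩
          rcases le_abs.mp hj.le with h | h
          · exact Or.inl h
          · refine Or.inr ?_
            simp only [Set.mem_setOf_eq, neg_mul]
            rw [Finset.sum_neg_distrib]
            exact h
        calc μ Gᶜ ≤ μ (⋃ j : Fin s, _) := measure_mono hsub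
          _ ≤ ∑' j : Fin s, μ ({x : Fin n → ℝ | t ≤ ∑ i, X i (e j) * x i} ∪
              {x : Fin n → ℝ | t ≤ ∑ i, (-(X i (e j))) * x i}) := measure_iUnion_le _
          _ = ∑ j : Fin s, μ ({x : Fin n → ℝ | t ≤ ∑ i, X i (e j) * x i} ∪
              {x : Fin n → ℝ | t ≤ ∑ i, (-(X i (e j))) * x i}) := tsum_fintype _
          _ ≤ ∑ _j : Fin s, (ENNReal.ofReal (p_b / (2 * s)) + ENNReal.ofReal (p_b / (2 * s))) :=
              Finset.sum_le_sum fun j _ =>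
                le_trans (measure_union_le _ _)
                  (add_le_add (htail _ fun i => hXM i (e j))
                    (htail _ fun i => by rw [abs_neg]; exact hXM i (e j)))
          _ = ENNReal.ofReal p_b := by
              rw [Finset.sum_const, Finset.card_univ, Fintype.card_fin,
                ← ENNReal.ofReal_add (by positivity) (by positivity), nsmul_eq_mul,
                ← ENNReal.ofReal_natCast s, ← ENNReal.ofReal_mul (Nat.cast_nonneg s)]
              congr 1
              field_simp
              ring
      have hGsub : ε ⁻¹' G ⊆ {ω | norm2 (αhat ω - αS) ≤
          σε * XM * Real.sqrt (2 * s * Real.log R) / ((1 - ζ) * Real.sqrt n)} := by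
        intro ω hω
        simp only [Set.mem_preimage, hGdef, Set.mem_setOf_eq] at hω
        simp only [Set.mem_setOf_eq]
        refine le_trans (part1 ω) ?_
        have hnu : norm2 (XSᵀ.mulVec (ε ω)) ≤ Real.sqrt s * t := by
          rw [norm2]
          calc Real.sqrt (∑ j, (XSᵀ.mulVec (ε ω)) j ^ 2)
              ≤ Real.sqrt (∑ _j : Fin s, t ^ 2) := by
                refine Real.sqrt_le_sqrt (Finset.sum_le_sum fun j _ => ?_)
                rw [hZcomp]
                exact sq_le_sq' (abs_le.mp (hω j)).1 (abs_le.mp (hω j)).2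
            _ = Real.sqrt ((s:ℝ) * t ^ 2) := by
                rw [Finset.sum_const, Finset.card_univ, Fintype.card_fin, nsmul_eq_mul]
            _ = Real.sqrt s * t := by
                rw [Real.sqrt_mul (Nat.cast_nonneg s), Real.sqrt_sq ht]
        calc norm2 (XSᵀ.mulVec (ε ω)) / ((n:ℝ) * (1 - ζ))
            ≤ (Real.sqrt s * t) / ((n:ℝ) * (1 - ζ)) := (div_le_div_iff_of_pos_right hc).mpr hnu
          _ = σε * XM * Real.sqrt (2 * s * Real.log R) / ((1 - ζ) * Real.sqrt n) := by
              have hss : Real.sqrt s * Real.sqrt (2 * Real.log R)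
                  = Real.sqrt (2 * s * Real.log R) := by
                rw [← Real.sqrt_mul (Nat.cast_nonneg s)]
                congr 1
                ring
              have hnn : Real.sqrt n * Real.sqrt n = (n:ℝ) :=
                Real.mul_self_sqrt (Nat.cast_nonneg n)
              have hsn : Real.sqrt n ≠ 0 := by positivity
              rw [htdef, ← hss]
              rw [div_eq_div_iff (by positivity) (by positivity)]
              linear_combination
                (σε * XM * Real.sqrt s * Real.sqrt (2 * Real.log R) * (1 - ζ)) * hnn
      have hfinal : 1 - ENNReal.ofReal p_b ≤ P (ε ⁻¹' G) := by
        have hcompl := measure_add_measure_compl (μ := P) (hmeas hGm)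
        have hPc : P ((ε ⁻¹' G)ᶜ) ≤ ENNReal.ofReal p_b := by
          rw [← Set.preimage_compl, ← Measure.map_apply hmeas hGm.compl, hlaw]
          exact hGc
        rw [tsub_le_iff_right]
        calc (1:ℝ≥0∞) = P Set.univ := measure_univ.symm
          _ = P (ε ⁻¹' G) + P ((ε ⁻¹' G)ᶜ) := hcompl.symm
          _ ≤ P (ε ⁻¹' G) + ENNReal.ofReal p_b := add_le_add_right hPc _
      exact le_trans hfinal (measure_mono hGsub)
end
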